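/- arXiv:1803.01917 — 2 statements merged into one kernel-verified Lean document; each statement's English description precedes it below -/
import Mathlib

section
/- Let Γ be a finitely generated group with Cayley graph G, and let A = ∪_{n≥1} A_n where A_0 = {e}, A_n = A_{n−1} ∪ γ_n A_{n−1} with d_G(e, γ_n) = 3·10^n. Then every non-identity element of A can be written uniquely as a product γ_{n_k} γ_{n_{k−1}} ⋯ γ_{n_1} with n_k > n_{k−1} > ⋯ > n_1. -/
open scoped Pointwise

/-- Word metric of the Cayley graph `Cay(Γ, S)`. -/
noncomputable def wordDist {Γ : Type*} [Group Γ] (S : Set Γ) (γ δ : Γ) : ℕ :=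
  sInf {n | ∃ l : List Γ, (∀ s ∈ l, s ∈ S) ∧ l.length = n ∧ γ * l.prod = δ}

section Aux

variable {Γ : Type*} [Group Γ] (S : Set Γ)

/-- `g` is represented by an `S`-word of length at most `L`. -/
def RepBy (g : Γ) (L : ℕ) : Prop :=
  ∃ w : List Γ, (∀ s ∈ w, s ∈ S) ∧ w.length ≤ L ∧ w.prod = g

variable {S}

lemma repBy_mono {g : Γ} {L L' : ℕ} (h : RepBy S g L) (hL : L ≤ L') : RepBy S g L' := by
  obtain ⟨w, hw, hlen, hp⟩ := h
  exact ⟨w, hw, hlen.trans hL, hp⟩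

lemma repBy_one : RepBy S (1 : Γ) 0 := ⟨[], by simp, by simp, by simp⟩

lemma repBy_mul {a b : Γ} {L M : ℕ} (ha : RepBy S a L) (hb : RepBy S b M) :
    RepBy S (a * b) (L + M) := by
  obtain ⟨w, hw, hlen, hp⟩ := ha
  obtain ⟨w', hw', hlen', hp'⟩ := hb
  refine ⟨w ++ w', ?_, ?_, by simp [hp, hp']⟩
  · intro s hs; rcases List.mem_append.1 hs with h | h
    · exact hw s h
    · exact hw' s h
  · simpa using Nat.add_le_add hlen hlen'

lemma repBy_inv (hSsym : ∀ s ∈ S, s⁻¹ ∈ S) {g : Γ} {L : ℕ} (h : RepBy S g L) :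
    RepBy S g⁻¹ L := by
  obtain ⟨w, hw, hlen, hp⟩ := h
  refine ⟨(w.map fun x => x⁻¹).reverse, ?_, by simpa using hlen, ?_⟩
  · intro s hs
    simp only [List.mem_reverse, List.mem_map] at hs
    obtain ⟨x, hx, rfl⟩ := hs
    exact hSsym x (hw x hx)
  · rw [← List.prod_inv_reverse, hp]

lemma wordDist_le {g : Γ} {w : List Γ} (hw : ∀ s ∈ w, s ∈ S) (hp : w.prod = g) :
    wordDist S 1 g ≤ w.length :=
  Nat.sInf_le ⟨w, hw, rfl, by simp [hp]⟩

lemma repBy_gamma {γ : ℕ → Γ} (hγ : ∀ n : ℕ, 1 ≤ n → wordDist S 1 (γ n) = 3 * 10 ^ n)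
    {n : ℕ} (hn : 1 ≤ n) : RepBy S (γ n) (3 * 10 ^ n) := by
  have hne : {m | ∃ l : List Γ, (∀ s ∈ l, s ∈ S) ∧ l.length = m ∧ 1 * l.prod = γ n}.Nonempty := by
    by_contra hc
    rw [Set.not_nonempty_iff_eq_empty] at hc
    have := hγ n hn
    rw [wordDist, hc, Nat.sInf_empty] at this
    exact absurd this.symm (by positivity)
  obtain ⟨l, hl, hlen, hp⟩ := Nat.sInf_mem hne
  exact ⟨l, hl, by rw [hlen]; exact (hγ n hn).le, by rwa [one_mul] at hp⟩

/-- Geometric bound. -/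
lemma geo_bound : ∀ M : ℕ, 2 * (∑ i ∈ Finset.range (M + 1), 3 * 10 ^ i) < 3 * 10 ^ (M + 1) := by
  intro M
  induction M with
  | zero => simp
  | succ M ih =>
      rw [Finset.sum_range_succ, Nat.mul_add]
      have : (3 : ℕ) * 10 ^ (M + 1 + 1) = 3 * 10 ^ (M + 1) + 27 * 10 ^ (M + 1) := by ring
      rw [this]
      have h2 : 2 * (3 * 10 ^ (M + 1)) ≤ 27 * 10 ^ (M + 1) := by nlinarith [pow_pos (by norm_num : (0:ℕ) < 10) (M+1)]
      omega

lemma repBy_list {γ : ℕ → Γ} (hγ : ∀ n : ℕ, 1 ≤ n → wordDist S 1 (γ n) = 3 * 10 ^ n) :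
    ∀ (l : List ℕ) (M : ℕ), l.Pairwise (· > ·) → (∀ i ∈ l, 1 ≤ i) → (∀ i ∈ l, i ≤ M) →
      RepBy S ((l.map γ).prod) (∑ i ∈ Finset.range (M + 1), 3 * 10 ^ i) := by
  intro l
  induction l with
  | nil => intro M _ _ _; simpa using repBy_mono (repBy_one) (Nat.zero_le _)
  | cons h t ih =>
      intro M hpw h1 hM
      have hh1 : 1 ≤ h := h1 h (by simp)
      have hhM : h ≤ M := hM h (by simp)
      have htlt : ∀ i ∈ t, i ≤ h - 1 := by
        intro i hi
        have := (List.pairwise_cons.1 hpw).1 i hi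
        omega
      have ht : RepBy S ((t.map γ).prod) (∑ i ∈ Finset.range ((h - 1) + 1), 3 * 10 ^ i) :=
        ih (h - 1) (List.pairwise_cons.1 hpw).2 (fun i hi => h1 i (by simp [hi]))
          htlt
      have hg : RepBy S (γ h) (3 * 10 ^ h) := repBy_gamma hγ hh1
      have hmul := repBy_mul hg ht
      have hsum : 3 * 10 ^ h + (∑ i ∈ Finset.range ((h - 1) + 1), 3 * 10 ^ i)
          ≤ ∑ i ∈ Finset.range (M + 1), 3 * 10 ^ i := by
        have heq : (h - 1) + 1 = h := by omega
        rw [heq]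
        have : 3 * 10 ^ h + (∑ i ∈ Finset.range h, 3 * 10 ^ i)
            = ∑ i ∈ Finset.range (h + 1), 3 * 10 ^ i := by
          rw [Finset.sum_range_succ]; ring
        rw [this]
        exact Finset.sum_le_sum_of_subset (by
          intro x hx
          simp only [Finset.mem_range] at hx ⊢
          omega)
      have : (h :: t).map γ = γ h :: t.map γ := rfl
      rw [this, List.prod_cons]
      exact repBy_mono hmul hsum

/-- Key contradiction: `γ h` cannot equal a quotient of products of lower-index `γ`'s. -/
lemma key_ne {γ : ℕ → Γ} (hSsym : ∀ s ∈ S, s⁻¹ ∈ S)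
    (hγ : ∀ n : ℕ, 1 ≤ n → wordDist S 1 (γ n) = 3 * 10 ^ n)
    {h : ℕ} (hh : 1 ≤ h) {l l' : List ℕ}
    (hcl : l.Pairwise (· > ·)) (hcl' : l'.Pairwise (· > ·))
    (h1l : ∀ i ∈ l, 1 ≤ i) (h1l' : ∀ i ∈ l', 1 ≤ i)
    (hbl : ∀ i ∈ l, i ≤ h - 1) (hbl' : ∀ i ∈ l', i ≤ h - 1) :
    γ h * (l.map γ).prod ≠ (l'.map γ).prod := by
  intro heq
  set B := ∑ i ∈ Finset.range ((h - 1) + 1), 3 * 10 ^ i with hB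
  have hrepl : RepBy S ((l.map γ).prod) B := repBy_list hγ l (h - 1) hcl h1l hbl
  have hrepl' : RepBy S ((l'.map γ).prod) B := repBy_list hγ l' (h - 1) hcl' h1l' hbl'
  have hgam : γ h = (l'.map γ).prod * ((l.map γ).prod)⁻¹ := by
    rw [← heq]; group
  have hrep : RepBy S (γ h) (B + B) := by
    rw [hgam]; exact repBy_mul hrepl' (repBy_inv hSsym hrepl)
  obtain ⟨w, hw, hlen, hp⟩ := hrep
  have hle := wordDist_le hw hp
  have hlt : B + B < 3 * 10 ^ h := by
    have hge := geo_bound (h - 1)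
    have heq2 : (h - 1) + 1 = h := by omega
    rw [heq2] at hge
    rw [hB, heq2]
    omega
  rw [hγ h hh] at hle
  omega

lemma uniq_list {γ : ℕ → Γ} (hSsym : ∀ s ∈ S, s⁻¹ ∈ S)
    (hγ : ∀ n : ℕ, 1 ≤ n → wordDist S 1 (γ n) = 3 * 10 ^ n) :
    ∀ l l' : List ℕ, l.Pairwise (· > ·) → l'.Pairwise (· > ·) →
      (∀ i ∈ l, 1 ≤ i) → (∀ i ∈ l', 1 ≤ i) →
      (l.map γ).prod = (l'.map γ).prod → l = l' := by
  intro l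
  induction l with
  | nil =>
      intro l' _ hc' _ h1' heq
      cases l' with
      | nil => rfl
      | cons h' t' =>
          exfalso
          have hh1 : 1 ≤ h' := h1' h' (by simp)
          have hbt' : ∀ i ∈ t', i ≤ h' - 1 := by
            intro i hi; have := (List.pairwise_cons.1 hc').1 i hi; omega
          refine key_ne hSsym hγ hh1 (List.pairwise_cons.1 hc').2 List.Pairwise.nil
            (fun i hi => h1' i (by simp [hi])) (by simp) hbt' (by simp) ?_
          simp only [List.map_cons, List.prod_cons] at heq
          simp [← heq]
  | cons h t ih =>
      intro l' hc hc' h1 h1' heq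
      have hh1 : 1 ≤ h := h1 h (by simp)
      have hbt : ∀ i ∈ t, i ≤ h - 1 := by
        intro i hi; have := (List.pairwise_cons.1 hc).1 i hi; omega
      cases l' with
      | nil =>
          exfalso
          refine key_ne hSsym hγ hh1 (List.pairwise_cons.1 hc).2 List.Pairwise.nil
            (fun i hi => h1 i (by simp [hi])) (by simp) hbt (by simp) ?_
          simpa using heq
      | cons h' t' =>
          have hh1' : 1 ≤ h' := h1' h' (by simp)
          have hbt' : ∀ i ∈ t', i ≤ h' - 1 := by
            intro i hi; have := (List.pairwise_cons.1 hc').1 i hi; omega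
          rcases lt_trichotomy h h' with hlt | heqh | hgt
          · exfalso
            refine key_ne hSsym hγ hh1' (List.pairwise_cons.1 hc').2 hc
              (fun i hi => h1' i (by simp [hi])) h1 hbt'
              (fun i hi => ?_) ?_
            · rcases List.mem_cons.1 hi with rfl | hi
              · omega
              · have := hbt i hi; omega
            · simp only [List.map_cons, List.prod_cons] at heq ⊢
              rw [← heq]
          · subst heqh
            simp only [List.map_cons, List.prod_cons] at heq
            have := mul_left_cancel heq
            rw [ih t' (List.pairwise_cons.1 hc).2 (List.pairwise_cons.1 hc').2
              (fun i hi => h1 i (by simp [hi])) (fun i hi => h1' i (by simp [hi])) this]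
          · exfalso
            refine key_ne hSsym hγ hh1 (List.pairwise_cons.1 hc).2 hc'
              (fun i hi => h1 i (by simp [hi])) h1' hbt
              (fun i hi => ?_) ?_
            · rcases List.mem_cons.1 hi with rfl | hi
              · omega
              · have := hbt' i hi; omega
            · simp only [List.map_cons, List.prod_cons] at heq ⊢
              rw [heq]

end Aux

/-- with `A_0 = {e}`, `A_n = A_{n−1} ∪ γ_n A_{n−1}` and `d_G(e, γ_n) = 3·10^n`,
every non-identity element of `A = ⋃ A_n` is uniquely a product `γ_{n_k} ⋯ γ_{n_1}` with
`n_k > ⋯ > n_1 ≥ 1`. -/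
theorem stmt5 {Γ : Type*} [Group Γ] (S : Set Γ)
    (hSfin : S.Finite) (hSsym : ∀ s ∈ S, s⁻¹ ∈ S) (hSgen : Subgroup.closure S = ⊤)
    (γ : ℕ → Γ) (hγ : ∀ n : ℕ, 1 ≤ n → wordDist S 1 (γ n) = 3 * 10 ^ n)
    (A : ℕ → Set Γ) (hA0 : A 0 = {1})
    (hAn : ∀ n : ℕ, A (n + 1) = A n ∪ (γ (n + 1)) • A n) :
    ∀ g ∈ ⋃ n, A n, g ≠ 1 →
      ∃! l : List ℕ, l ≠ [] ∧ l.Chain' (· > ·) ∧ (∀ i ∈ l, 1 ≤ i) ∧ (l.map γ).prod = g := by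
  have exist : ∀ n : ℕ, ∀ g ∈ A n, ∃ l : List ℕ, l.Pairwise (· > ·) ∧
      (∀ i ∈ l, 1 ≤ i ∧ i ≤ n) ∧ (l.map γ).prod = g := by
    intro n
    induction n with
    | zero =>
        intro g hg
        rw [hA0] at hg
        rw [Set.mem_singleton_iff] at hg
        exact ⟨[], by simp, by simp, by simp [hg]⟩
    | succ n ih =>
        intro g hg
        rw [hAn n] at hg
        rcases hg with hg | hg
        · obtain ⟨l, hpw, hb, hp⟩ := ih g hg
          exact ⟨l, hpw, fun i hi => ⟨(hb i hi).1, (hb i hi).2.trans (by omega)⟩, hp⟩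
        · obtain ⟨a, ha, rfl⟩ := hg
          obtain ⟨l, hpw, hb, hp⟩ := ih a ha
          refine ⟨(n + 1) :: l, ?_, ?_, ?_⟩
          · exact List.pairwise_cons.2 ⟨fun i hi => by have := (hb i hi).2; omega, hpw⟩
          · intro i hi
            rcases List.mem_cons.1 hi with rfl | hi
            · omega
            · exact ⟨(hb i hi).1, (hb i hi).2.trans (by omega)⟩
          · simp [hp]
  intro g hg hg1
  obtain ⟨n, hn⟩ := Set.mem_iUnion.1 hg
  obtain ⟨l, hpw, hb, hp⟩ := exist n g hn
  have hlne : l ≠ [] := by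
    intro h; subst h; simp at hp; exact hg1 hp.symm
  refine ⟨l, ⟨hlne, List.isChain_iff_pairwise.2 hpw, fun i hi => (hb i hi).1, hp⟩, ?_⟩
  intro l' ⟨_, hc', h1', hp'⟩
  exact uniq_list hSsym hγ l' l (List.isChain_iff_pairwise.1 hc') hpw h1'
    (fun i hi => (hb i hi).1) (hp'.trans hp.symm)
end

section
/- With A, Q_n as follows: A_0 = {e}, A_n = A_{n−1} ∪ γ_n A_{n−1} with d_G(e, γ_n) = 3·10^n, A = ∪ A_n, and Q_n = {e} ∪ {γ_{n_k}⋯γ_{n_1} ∈ A : n_1 ≥ n}: if γ, δ are distinct elements of Q_n, then the balls B_{10^n}(G, γ) and B_{10^n}(G, δ) of radius 10^n in the Cayley graph are disjoint. -/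
open scoped Pointwise

section Aux

variable {Γ : Type*} [Group Γ] {S : Set Γ}

lemma wd_set_nonempty (hSsym : ∀ s ∈ S, s⁻¹ ∈ S) (hSgen : Subgroup.closure S = ⊤)
    (a b : Γ) :
    {n | ∃ l : List Γ, (∀ s ∈ l, s ∈ S) ∧ l.length = n ∧ a * l.prod = b}.Nonempty := by
  have hU : S ∪ S⁻¹ = S := by
    apply Set.union_eq_self_of_subset_right
    intro s hs
    have := hSsym s⁻¹ hs
    simpa using this
  have hb : a⁻¹ * b ∈ Submonoid.closure S := by
    have h1 : a⁻¹ * b ∈ Subgroup.closure S := by rw [hSgen]; trivial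
    have h2 : a⁻¹ * b ∈ (Subgroup.closure S).toSubmonoid := h1
    rwa [Subgroup.closure_toSubmonoid, hU] at h2
  obtain ⟨l, hl, hprod⟩ := Submonoid.exists_list_of_mem_closure hb
  exact ⟨l.length, l, hl, rfl, by rw [hprod]; group⟩

lemma wd_le (a b : Γ) (l : List Γ) (hl : ∀ s ∈ l, s ∈ S) (hp : a * l.prod = b) :
    wordDist S a b ≤ l.length :=
  Nat.sInf_le ⟨l, hl, rfl, hp⟩

lemma wd_exists (hSsym : ∀ s ∈ S, s⁻¹ ∈ S) (hSgen : Subgroup.closure S = ⊤) (a b : Γ) :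
    ∃ l : List Γ, (∀ s ∈ l, s ∈ S) ∧ l.length = wordDist S a b ∧ a * l.prod = b :=
  Nat.sInf_mem (wd_set_nonempty hSsym hSgen a b)

lemma wd_conj (a b : Γ) : wordDist S a b = wordDist S 1 (a⁻¹ * b) := by
  unfold wordDist
  congr 1
  ext n
  constructor
  · rintro ⟨l, hl, hlen, hp⟩
    exact ⟨l, hl, hlen, by rw [one_mul, ← hp]; group⟩
  · rintro ⟨l, hl, hlen, hp⟩
    refine ⟨l, hl, hlen, ?_⟩
    rw [one_mul] at hp
    rw [hp]; group

lemma wd_mul (hSsym : ∀ s ∈ S, s⁻¹ ∈ S) (hSgen : Subgroup.closure S = ⊤) (u v : Γ) :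
    wordDist S 1 (u * v) ≤ wordDist S 1 u + wordDist S 1 v := by
  obtain ⟨lu, hu, hul, hup⟩ := wd_exists hSsym hSgen 1 u
  obtain ⟨lv, hv, hvl, hvp⟩ := wd_exists hSsym hSgen 1 v
  have := wd_le 1 (u * v) (lu ++ lv) (by
    intro s hs
    rcases List.mem_append.mp hs with h | h
    · exact hu s h
    · exact hv s h) (by rw [List.prod_append, one_mul] at *; rw [hup, hvp])
  simpa [hul, hvl] using this

lemma wd_inv (hSsym : ∀ s ∈ S, s⁻¹ ∈ S) (hSgen : Subgroup.closure S = ⊤) (u : Γ) :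
    wordDist S 1 u⁻¹ = wordDist S 1 u := by
  have key : ∀ w : Γ, wordDist S 1 w⁻¹ ≤ wordDist S 1 w := by
    intro w
    obtain ⟨l, hl, hll, hlp⟩ := wd_exists hSsym hSgen 1 w
    rw [one_mul] at hlp
    have := wd_le 1 w⁻¹ ((l.map fun x => x⁻¹).reverse) (by
      intro s hs
      simp only [List.mem_reverse, List.mem_map] at hs
      obtain ⟨t, ht, rfl⟩ := hs
      exact hSsym t (hl t ht))
      (by rw [one_mul, ← List.prod_inv_reverse, hlp])
    simpa [hll] using this
  refine le_antisymm (key u) ?_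
  have := key u⁻¹
  simpa using this

lemma wd_rev (hSsym : ∀ s ∈ S, s⁻¹ ∈ S) (hSgen : Subgroup.closure S = ⊤) (u v : Γ) :
    wordDist S 1 u ≤ wordDist S 1 (u * v) + wordDist S 1 v := by
  have h1 : wordDist S 1 u ≤ wordDist S 1 (u * v) + wordDist S 1 v⁻¹ := by
    have := wd_mul hSsym hSgen (u * v) v⁻¹
    simpa using this
  rwa [wd_inv hSsym hSgen] at h1

lemma geom_sum_lt_aux (l : List ℕ) (h : l.Pairwise (· > ·)) (m : ℕ) (hm : ∀ i ∈ l, i < m) :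
    9 * (l.map fun i => 10 ^ i).sum < 10 ^ m := by
  induction l generalizing m with
  | nil => simpa using (Nat.pow_pos (by norm_num : 0 < 10) : 0 < 10 ^ m)
  | cons a t ih =>
    have hpt := List.pairwise_cons.mp h
    have ha : a < m := hm a (List.mem_cons_self)
    have ht : 9 * (t.map fun i => 10 ^ i).sum < 10 ^ a := ih hpt.2 a hpt.1
    have h2 : 10 ^ (a + 1) ≤ 10 ^ m := Nat.pow_le_pow_right (by norm_num) ha
    simp only [List.map_cons, List.sum_cons]
    calc 9 * (10 ^ a + (t.map fun i => 10 ^ i).sum)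
        = 9 * 10 ^ a + 9 * (t.map fun i => 10 ^ i).sum := by ring
      _ < 9 * 10 ^ a + 10 ^ a := by omega
      _ = 10 ^ (a + 1) := by ring
      _ ≤ 10 ^ m := h2

lemma prod_wd_le (hSsym : ∀ s ∈ S, s⁻¹ ∈ S) (hSgen : Subgroup.closure S = ⊤)
    (γ : ℕ → Γ) (hγ : ∀ n : ℕ, 1 ≤ n → wordDist S 1 (γ n) = 3 * 10 ^ n)
    (l : List ℕ) (h1 : ∀ i ∈ l, 1 ≤ i) :
    wordDist S 1 (l.map γ).prod ≤ 3 * (l.map fun i => 10 ^ i).sum := by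
  induction l with
  | nil =>
    simp only [List.map_nil, List.prod_nil, List.sum_nil, mul_zero, Nat.le_zero]
    have := wd_le (S := S) 1 1 [] (by simp) (by simp)
    simpa using this
  | cons a t ih =>
    simp only [List.map_cons, List.prod_cons, List.sum_cons]
    calc wordDist S 1 (γ a * (t.map γ).prod)
        ≤ wordDist S 1 (γ a) + wordDist S 1 (t.map γ).prod := wd_mul hSsym hSgen _ _
      _ ≤ 3 * 10 ^ a + 3 * (t.map fun i => 10 ^ i).sum := by
          have := ih (fun i hi => h1 i (List.mem_cons_of_mem a hi))
          have hha := hγ a (h1 a (List.mem_cons_self))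
          omega
      _ = 3 * (10 ^ a + (t.map fun i => 10 ^ i).sum) := by ring

lemma helperH (hSsym : ∀ s ∈ S, s⁻¹ ∈ S) (hSgen : Subgroup.closure S = ⊤)
    (γ : ℕ → Γ) (hγ : ∀ n : ℕ, 1 ≤ n → wordDist S 1 (γ n) = 3 * 10 ^ n)
    (m : ℕ) (hm : 1 ≤ m) (l1 t : List ℕ)
    (h1 : l1.Pairwise (· > ·)) (ht : t.Pairwise (· > ·))
    (hl1m : ∀ i ∈ l1, i < m) (htm : ∀ i ∈ t, i < m)
    (h11 : ∀ i ∈ l1, 1 ≤ i) (ht1 : ∀ i ∈ t, 1 ≤ i) :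
    2 * 10 ^ m < wordDist S 1 ((l1.map γ).prod⁻¹ * (γ m * (t.map γ).prod)) := by
  set p1 := (l1.map γ).prod with hp1
  set pt := (t.map γ).prod with hpt
  set g := p1⁻¹ * (γ m * pt) with hg
  have hfac : γ m = p1 * g * pt⁻¹ := by rw [hg]; group
  have htri : wordDist S 1 (γ m) ≤
      wordDist S 1 p1 + wordDist S 1 g + wordDist S 1 pt := by
    calc wordDist S 1 (γ m) = wordDist S 1 (p1 * g * pt⁻¹) := by rw [← hfac]
      _ ≤ wordDist S 1 (p1 * g) + wordDist S 1 pt⁻¹ := wd_mul hSsym hSgen _ _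
      _ ≤ wordDist S 1 p1 + wordDist S 1 g + wordDist S 1 pt⁻¹ := by
          have := wd_mul hSsym hSgen p1 g; omega
      _ = wordDist S 1 p1 + wordDist S 1 g + wordDist S 1 pt := by
          rw [wd_inv hSsym hSgen]
  have hb1 : wordDist S 1 p1 ≤ 3 * (l1.map fun i => 10 ^ i).sum :=
    prod_wd_le hSsym hSgen γ hγ l1 h11
  have hbt : wordDist S 1 pt ≤ 3 * (t.map fun i => 10 ^ i).sum :=
    prod_wd_le hSsym hSgen γ hγ t ht1
  have hg1 : 9 * (l1.map fun i => 10 ^ i).sum < 10 ^ m := geom_sum_lt_aux l1 h1 m hl1m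
  have hgt : 9 * (t.map fun i => 10 ^ i).sum < 10 ^ m := geom_sum_lt_aux t ht m htm
  have hγm : wordDist S 1 (γ m) = 3 * 10 ^ m := hγ m hm
  omega

lemma key_lemma (hSsym : ∀ s ∈ S, s⁻¹ ∈ S) (hSgen : Subgroup.closure S = ⊤)
    (γ : ℕ → Γ) (hγ : ∀ n : ℕ, 1 ≤ n → wordDist S 1 (γ n) = 3 * 10 ^ n)
    (n : ℕ) (hn : 1 ≤ n) :
    ∀ l1 l2 : List ℕ, l1.Pairwise (· > ·) → l2.Pairwise (· > ·) →
    (∀ i ∈ l1, n ≤ i) → (∀ i ∈ l2, n ≤ i) →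
    (l1.map γ).prod ≠ (l2.map γ).prod →
    2 * 10 ^ n < wordDist S 1 ((l1.map γ).prod⁻¹ * (l2.map γ).prod) := by
  intro l1
  induction l1 with
  | nil =>
    intro l2 _ h2 _ hn2 hne
    match l2 with
    | [] => exact absurd rfl hne
    | m :: t =>
      have hpc := List.pairwise_cons.mp h2
      have hmn : n ≤ m := hn2 m (List.mem_cons_self)
      have hm1 : 1 ≤ m := le_trans hn hmn
      have h := helperH hSsym hSgen γ hγ m hm1 [] t (by simp) hpc.2
        (by simp) hpc.1 (by simp)
        (fun i hi => le_trans hn (hn2 i (List.mem_cons_of_mem m hi)))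
      have hpow : 10 ^ n ≤ 10 ^ m := Nat.pow_le_pow_right (by norm_num) hmn
      simp only [List.map_nil, List.prod_nil, List.map_cons, List.prod_cons] at h ⊢
      omega
  | cons m1 t1 ih =>
    intro l2 h1 h2 hn1 hn2 hne
    have hpc1 := List.pairwise_cons.mp h1
    have hm1n : n ≤ m1 := hn1 m1 (List.mem_cons_self)
    have hm11 : 1 ≤ m1 := le_trans hn hm1n
    have ht1n : ∀ i ∈ t1, n ≤ i := fun i hi => hn1 i (List.mem_cons_of_mem m1 hi)
    have ht11 : ∀ i ∈ t1, 1 ≤ i := fun i hi => le_trans hn (ht1n i hi)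
    match l2 with
    | [] =>
      have h := helperH hSsym hSgen γ hγ m1 hm11 [] t1 (by simp) hpc1.2
        (by simp) hpc1.1 (by simp) ht11
      have hpow : 10 ^ n ≤ 10 ^ m1 := Nat.pow_le_pow_right (by norm_num) hm1n
      have heq : wordDist S 1 (((m1 :: t1).map γ).prod⁻¹ * (([] : List ℕ).map γ).prod)
          = wordDist S 1 ((([] : List ℕ).map γ).prod⁻¹ * ((m1 :: t1).map γ).prod) := by
        rw [← wd_inv hSsym hSgen]
        congr 1
        group
      rw [heq]
      simp only [List.map_nil, List.prod_nil, List.map_cons, List.prod_cons] at h ⊢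
      omega
    | m2 :: t2 =>
      have hpc2 := List.pairwise_cons.mp h2
      have hm2n : n ≤ m2 := hn2 m2 (List.mem_cons_self)
      have hm21 : 1 ≤ m2 := le_trans hn hm2n
      have ht2n : ∀ i ∈ t2, n ≤ i := fun i hi => hn2 i (List.mem_cons_of_mem m2 hi)
      have ht21 : ∀ i ∈ t2, 1 ≤ i := fun i hi => le_trans hn (ht2n i hi)
      rcases lt_trichotomy m1 m2 with hlt | heqm | hgt
      · have h := helperH hSsym hSgen γ hγ m2 hm21 (m1 :: t1) t2 h1 hpc2.2
          (by
            intro i hi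
            rcases List.mem_cons.mp hi with rfl | hi
            · exact hlt
            · exact lt_trans (hpc1.1 i hi) hlt)
          hpc2.1 (fun i hi => le_trans hn (hn1 i hi)) ht21
        have hpow : 10 ^ n ≤ 10 ^ m2 := Nat.pow_le_pow_right (by norm_num) hm2n
        simp only [List.map_cons, List.prod_cons] at h ⊢
        omega
      · subst heqm
        have hne' : (t1.map γ).prod ≠ (t2.map γ).prod := by
          intro hcontra
          apply hne
          simp only [List.map_cons, List.prod_cons, hcontra]
        have h := ih t2 hpc1.2 hpc2.2 ht1n ht2n hne'
        have heq : wordDist S 1 (((m1 :: t1).map γ).prod⁻¹ * ((m1 :: t2).map γ).prod)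
            = wordDist S 1 ((t1.map γ).prod⁻¹ * (t2.map γ).prod) := by
          congr 1
          simp only [List.map_cons, List.prod_cons]
          group
        rw [heq]
        exact h
      · have h := helperH hSsym hSgen γ hγ m1 hm11 (m2 :: t2) t1 h2 hpc1.2
          (by
            intro i hi
            rcases List.mem_cons.mp hi with rfl | hi
            · exact hgt
            · exact lt_trans (hpc2.1 i hi) hgt)
          hpc1.1 (fun i hi => le_trans hn (hn2 i hi)) ht11
        have hpow : 10 ^ n ≤ 10 ^ m1 := Nat.pow_le_pow_right (by norm_num) hm1n
        have heq : wordDist S 1 (((m1 :: t1).map γ).prod⁻¹ * ((m2 :: t2).map γ).prod)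
            = wordDist S 1 (((m2 :: t2).map γ).prod⁻¹ * ((m1 :: t1).map γ).prod) := by
          rw [← wd_inv hSsym hSgen]
          congr 1
          group
        rw [heq]
        simp only [List.map_cons, List.prod_cons] at h ⊢
        omega

end Aux

/-- with `d_G(e, γ_n) = 3·10^n` and
`Q_n = {e} ∪ {γ_{n_k}⋯γ_{n_1} : n_k > ⋯ > n_1 ≥ n}`, distinct elements of `Q_n` have
disjoint balls of radius `10^n` in the Cayley graph. -/
theorem stmt6 {Γ : Type*} [Group Γ] (S : Set Γ)
    (hSfin : S.Finite) (hSsym : ∀ s ∈ S, s⁻¹ ∈ S) (hSgen : Subgroup.closure S = ⊤)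
    (γ : ℕ → Γ) (hγ : ∀ n : ℕ, 1 ≤ n → wordDist S 1 (γ n) = 3 * 10 ^ n)
    (A : ℕ → Set Γ) (hA0 : A 0 = {1})
    (hAn : ∀ n : ℕ, A (n + 1) = A n ∪ (γ (n + 1)) • A n)
    (Q : ℕ → Set Γ)
    (hQ : ∀ n : ℕ, Q n = {1} ∪ {g | ∃ l : List ℕ,
      l ≠ [] ∧ l.Chain' (· > ·) ∧ (∀ i ∈ l, n ≤ i) ∧ (l.map γ).prod = g}) :
    ∀ n : ℕ, 1 ≤ n → ∀ a ∈ Q n, ∀ b ∈ Q n, a ≠ b →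
      ∀ x : Γ, ¬ (wordDist S a x ≤ 10 ^ n ∧ wordDist S b x ≤ 10 ^ n) := by
  intro n hn a ha b hb hab x ⟨hax, hbx⟩
  -- extract list representations
  have hrep : ∀ c ∈ Q n, ∃ l : List ℕ, l.Pairwise (· > ·) ∧ (∀ i ∈ l, n ≤ i) ∧
      (l.map γ).prod = c := by
    intro c hc
    rw [hQ n] at hc
    rcases hc with hc | hc
    · exact ⟨[], by simp, by simp, by simpa using hc.symm⟩
    · obtain ⟨l, _, hch, hge, hpr⟩ := hc
      exact ⟨l, List.isChain_iff_pairwise.mp hch, hge, hpr⟩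
  obtain ⟨la, hla, hlan, hlap⟩ := hrep a ha
  obtain ⟨lb, hlb, hlbn, hlbp⟩ := hrep b hb
  have hne : (la.map γ).prod ≠ (lb.map γ).prod := by rw [hlap, hlbp]; exact hab
  have hkey := key_lemma hSsym hSgen γ hγ n hn la lb hla hlb hlan hlbn hne
  rw [hlap, hlbp] at hkey
  -- triangle inequality
  have h1 : wordDist S a b = wordDist S 1 (a⁻¹ * b) := wd_conj a b
  have h2 : wordDist S 1 (a⁻¹ * b) ≤ wordDist S 1 (a⁻¹ * x) + wordDist S 1 (x⁻¹ * b) := by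
    have := wd_mul hSsym hSgen (a⁻¹ * x) (x⁻¹ * b)
    have heq : a⁻¹ * x * (x⁻¹ * b) = a⁻¹ * b := by group
    rwa [heq] at this
  have h3 : wordDist S 1 (a⁻¹ * x) = wordDist S a x := (wd_conj a x).symm
  have h4 : wordDist S 1 (x⁻¹ * b) = wordDist S b x := by
    rw [wd_conj b x, ← wd_inv hSsym hSgen]
    congr 1
    group
  omega
end
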